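/- Let x₁,…,xₙ be positive reals, not necessarily distinct, and S = {(±xᵢ,0),(0,±xᵢ)}. The Delaunay depth of the origin with respect to S equals n + 1 if and only if all the xᵢ are pairwise distinct. -/

import Mathlib

open Metric Set

noncomputable section

abbrev Pt : Type := EuclideanSpace ℝ (Fin 2)

def pt (a b : ℝ) : Pt := !₂[a, b]

/-- General position: no 3 collinear, no 4 cocircular. -/
def GenPos (S : Set Pt) : Prop :=
  (∀ T ⊆ S, T.ncard = 3 → ¬ Collinear ℝ T) ∧
  (∀ T ⊆ S, T.ncard = 4 → ¬ ∃ (c : Pt) (r : ℝ), ∀ p ∈ T, dist p c = r)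

/-- An empty circle through `p` and `q` witnessing Delaunay adjacency. -/
def EmptyCircle (S : Set Pt) (p q : Pt) : Prop :=
  ∃ (c : Pt) (r : ℝ), dist p c = r ∧ dist q c = r ∧
    ∀ s ∈ S, s ≠ p → s ≠ q → r < dist s c

/-- The Delaunay triangulation of `S` viewed as a graph on the plane
(vertices outside `S` are isolated). -/
def DelaunayGraph (S : Set Pt) : SimpleGraph Pt where
  Adj p q := p ≠ q ∧ p ∈ S ∧ q ∈ S ∧ EmptyCircle S p q
  symm := by
    constructor
    rintro p q ⟨hne, hp, hq, c, r, h1, h2, h3⟩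
    exact ⟨hne.symm, hq, hp, c, r, h2, h1, fun s hs h1' h2' => h3 s hs h2' h1'⟩
  loopless := ⟨fun p h => h.1 rfl⟩

/-- `p` is a vertex of the convex hull of `S`. -/
def HullVertex (S : Set Pt) (p : Pt) : Prop :=
  p ∈ S ∧ p ∉ convexHull ℝ (S \ {p})

/-- Delaunay depth of a point of `S`: one plus the graph distance in the
Delaunay triangulation to the set of convex-hull vertices. -/
def delaunayDepth (S : Set Pt) (p : Pt) : ℕ :=
  1 + sInf {d : ℕ | ∃ h : Pt, HullVertex S h ∧ (DelaunayGraph S).dist p h = d}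

/-- Delaunay depth of a query point `p` relative to `S`: its depth in `S ∪ {p}`. -/
def relDepth (S : Set Pt) (p : Pt) : ℕ := delaunayDepth (insert p S) p

/-- The segment corresponding to an (unordered) edge. -/
def edgeSeg (e : Sym2 Pt) : Set Pt :=
  Sym2.lift ⟨fun a b => segment ℝ a b, fun a b => segment_symm ℝ a b⟩ e

/-- The closed polygonal curve drawn by a closed walk of the graph. -/
def walkCurve {G : SimpleGraph Pt} {p : Pt} (w : G.Walk p p) : Set Pt :=
  ⋃ e ∈ w.edges, edgeSeg e

/-- `x` lies in the bounded open region enclosed by the curve. -/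
def InsideCurve (curve : Set Pt) (x : Pt) : Prop :=
  x ∉ curve ∧ Bornology.IsBounded (connectedComponentIn curveᶜ x)

/-- The element-uniqueness gadget: the four points `(±xᵢ,0), (0,±xᵢ)` for each `i`. -/
def gadget (n : ℕ) (x : Fin n → ℝ) : Set Pt :=
  ⋃ i : Fin n, {pt (x i) 0, pt (-(x i)) 0, pt 0 (x i), pt 0 (-(x i))}


namespace Aux

lemma pt_zero (a b : ℝ) : pt a b 0 = a := by simp [pt]
lemma pt_one (a b : ℝ) : pt a b 1 = b := by simp [pt]

lemma pt_inj {a b a' b' : ℝ} : pt a b = pt a' b' ↔ a = a' ∧ b = b' := by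
  constructor
  · intro h
    exact ⟨by simpa [pt] using congrArg (fun v : Pt => v 0) h, by simpa [pt] using congrArg (fun v : Pt => v 1) h⟩
  · rintro ⟨rfl, rfl⟩; rfl

lemma dist_sq_pt (a b : ℝ) (c : Pt) : dist (pt a b) c ^ 2 = (a - c 0)^2 + (b - c 1)^2 := by
  rw [EuclideanSpace.dist_eq, Real.sq_sqrt (by positivity)]
  simp [pt, Fin.sum_univ_two, Real.dist_eq, sq_abs]

lemma dist_pt_pt (a b a' b' : ℝ) :
    dist (pt a b) (pt a' b') = Real.sqrt ((a - a')^2 + (b - b')^2) := by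
  rw [EuclideanSpace.dist_eq]
  congr 1
  simp [pt, Fin.sum_univ_two, Real.dist_eq, sq_abs]

def axpt (e : Bool) (t : ℝ) : Pt := if e then pt t 0 else pt 0 t

lemma axpt_zero (e : Bool) : axpt e 0 = pt 0 0 := by cases e <;> rfl

lemma axpt_inj (e : Bool) {s t : ℝ} : axpt e s = axpt e t ↔ s = t := by
  cases e <;> simp [axpt, pt_inj]

lemma axpt_cross {e e' : Bool} (h : e ≠ e') {a c : ℝ} (ha : a ≠ 0) :
    axpt e a ≠ axpt e' c := by
  cases e <;> cases e' <;> simp_all [axpt, pt_inj] <;> rintro rfl <;> simp_all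

lemma dist_axpt_same (e : Bool) (a c : ℝ) : dist (axpt e a) (axpt e c) = |a - c| := by
  cases e <;> simp [axpt, dist_pt_pt, Real.sqrt_sq_eq_abs]

lemma dist_axpt_cross {e e' : Bool} (h : e ≠ e') (a c : ℝ) :
    dist (axpt e a) (axpt e' c) = Real.sqrt (a^2 + c^2) := by
  cases e <;> cases e' <;> first
    | exact absurd rfl h
    | (simp [axpt, dist_pt_pt]; try ring_nf)

lemma dist_sq_axpt (c : Pt) (r : ℝ) (e : Bool) (ε t : ℝ) (hε : ε = 1 ∨ ε = -1) :
    dist (axpt e (ε*t)) c ^ 2 - r ^ 2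
      = t^2 - 2*(ε*(if e then c 0 else c 1))*t + ((c 0)^2 + (c 1)^2 - r^2) := by
  cases e <;> rcases hε with rfl | rfl <;>
    simp only [axpt, Bool.false_eq_true, if_true, if_false, dist_sq_pt] <;> ring

end Aux

namespace Aux

open scoped Classical

def gset (n : ℕ) (b : Fin n → ℝ) : Set Pt := insert (pt 0 0) (gadget n b)

variable {n : ℕ} {b : Fin n → ℝ}

lemma mem_gset {s : Pt} : s ∈ gset n b ↔ s = pt 0 0 ∨
    ∃ k : Fin n, s = pt (b k) 0 ∨ s = pt (-(b k)) 0 ∨ s = pt 0 (b k) ∨ s = pt 0 (-(b k)) := by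
  simp [gset, gadget, Set.mem_iUnion]

lemma origin_mem : pt 0 0 ∈ gset n b := Set.mem_insert _ _

lemma axpt_mem {ε : ℝ} (e : Bool) (hε : ε = 1 ∨ ε = -1) (k : Fin n) :
    axpt e (ε * b k) ∈ gset n b := by
  refine mem_gset.2 (Or.inr ⟨k, ?_⟩)
  cases e <;> rcases hε with rfl | rfl <;> simp [axpt]

def val (s : Pt) : ℝ := max |s 0| |s 1|

lemma val_origin : val (pt 0 0) = 0 := by simp [val, pt_zero, pt_one]

lemma val_x {a : ℝ} (ha : 0 ≤ a) : val (pt a 0) = a := by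
  simp only [val, pt_zero, pt_one, abs_zero, abs_of_nonneg ha]; exact max_eq_left ha

lemma val_negx {a : ℝ} (ha : 0 ≤ a) : val (pt (-a) 0) = a := by
  simp only [val, pt_zero, pt_one, abs_zero, abs_neg, abs_of_nonneg ha]; exact max_eq_left ha

lemma val_y {a : ℝ} (ha : 0 ≤ a) : val (pt 0 a) = a := by
  simp only [val, pt_zero, pt_one, abs_zero, abs_of_nonneg ha]; exact max_eq_right ha

lemma val_negy {a : ℝ} (ha : 0 ≤ a) : val (pt 0 (-a)) = a := by
  simp only [val, pt_zero, pt_one, abs_zero, abs_neg, abs_of_nonneg ha]; exact max_eq_right ha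

lemma val_axpt {ε u : ℝ} (e : Bool) (hε : ε = 1 ∨ ε = -1) (hu : 0 ≤ u) :
    val (axpt e (ε * u)) = u := by
  cases e <;> rcases hε with rfl | rfl <;>
    simp only [axpt, Bool.false_eq_true, if_true, if_false, one_mul, neg_one_mul]
  · exact val_y hu
  · exact val_negy hu
  · exact val_x hu
  · exact val_negx hu

/-- Every member of the gadget-with-origin set has a normal form. -/
lemma shape (hpos : ∀ i, 0 < b i) {s : Pt} (hs : s ∈ gset n b) :
    ∃ (e : Bool) (ε u : ℝ), (ε = 1 ∨ ε = -1) ∧ 0 ≤ u ∧ (u = 0 ∨ ∃ k, u = b k) ∧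
      s = axpt e (ε * u) ∧ val s = u := by
  rcases mem_gset.1 hs with rfl | ⟨k, h | h | h | h⟩
  · exact ⟨true, 1, 0, Or.inl rfl, le_rfl, Or.inl rfl, by simp [axpt_zero], val_origin⟩
  · exact ⟨true, 1, b k, Or.inl rfl, (hpos k).le, Or.inr ⟨k, rfl⟩, by simp [axpt, h],
      by rw [h]; exact val_x (hpos k).le⟩
  · exact ⟨true, -1, b k, Or.inr rfl, (hpos k).le, Or.inr ⟨k, rfl⟩, by simp [axpt, h],
      by rw [h]; exact val_negx (hpos k).le⟩
  · exact ⟨false, 1, b k, Or.inl rfl, (hpos k).le, Or.inr ⟨k, rfl⟩, by simp [axpt, h],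
      by rw [h]; exact val_y (hpos k).le⟩
  · exact ⟨false, -1, b k, Or.inr rfl, (hpos k).le, Or.inr ⟨k, rfl⟩, by simp [axpt, h],
      by rw [h]; exact val_negy (hpos k).le⟩


lemma coreB (d f0 u w m : ℝ) (hum : u < m) (hmw : m < w)
    (hp : u^2 - 2*d*u + f0 = 0) (hq : w^2 - 2*d*w + f0 = 0)
    (h1 : 0 < m^2 - 2*d*m + f0) : False := by
  nlinarith [mul_pos (sub_pos.2 hum) (sub_pos.2 hmw), sq_nonneg (u - w)]

lemma coreC (d f0 u w : ℝ) (hu : 0 < u) (hw : 0 < w)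
    (hp : u^2 - 2*d*u + f0 = 0) (hq : w^2 + 2*d*w + f0 = 0) (hf : 0 < f0) : False := by
  nlinarith [mul_pos hu hw, mul_pos (mul_pos hu hw) (add_pos hu hw)]

lemma coreA (d1 d2 f0 u w m : ℝ) (hu : 0 ≤ u) (hum : u < m) (hmw : m < w)
    (hp : u^2 - 2*d1*u + f0 = 0) (hq : w^2 - 2*d2*w + f0 = 0)
    (hforig : 0 < u → 0 < f0)
    (h1 : 0 < m^2 - 2*d1*m + f0) (h2 : 0 < m^2 - 2*d2*m + f0) : False := by
  rcases hu.eq_or_lt with h0 | h0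
  · subst h0
    have hf0 : f0 = 0 := by nlinarith
    have hm : 0 < m := hum
    have hw : 0 < w := by linarith
    have h2d : 2 * d2 * w = w^2 := by nlinarith
    nlinarith [mul_pos hm (mul_pos hw (sub_pos.2 hmw))]
  · have hf : 0 < f0 := hforig h0
    have key1 : f0 < m * u := by nlinarith [mul_pos (sub_pos.2 hum) h0]
    have key2 : m * w < f0 := by
      nlinarith [mul_pos (sub_pos.2 hmw) (h0.trans (hum.trans hmw))]
    nlinarith [mul_pos (h0.trans hum) (sub_pos.2 (hum.trans hmw))]

/-- No Delaunay edge of the gadget skips over a ring. -/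
lemma noskip (hb : StrictMono b) (hpos : ∀ i, 0 < b i) {p q : Pt}
    (h : (DelaunayGraph (gset n b)).Adj p q) (k : Fin n)
    (h1 : val p < b k) (h2 : b k < val q) : False := by
  obtain ⟨hne, hp, hq, c, r, hpc, hqc, hemp⟩ := h
  set c0 := c 0 with hc0
  set c1 := c 1 with hc1
  set f0 := c0^2 + c1^2 - r^2 with hf0
  have hr0 : 0 ≤ r := hpc ▸ dist_nonneg
  have hF : ∀ s ∈ gset n b, s ≠ p → s ≠ q → 0 < dist s c ^ 2 - r ^ 2 := by
    intro s hs hsp hsq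
    have hlt := hemp s hs hsp hsq
    nlinarith [dist_nonneg (x := s) (y := c)]
  obtain ⟨e1, ε1, u, hε1, hu0, -, rfl, hvp⟩ := shape hpos hp
  obtain ⟨e2, ε2, w, hε2, hw0, -, rfl, hvq⟩ := shape hpos hq
  rw [hvp] at h1
  rw [hvq] at h2
  have hε1' : ε1 ≠ 0 := by rcases hε1 with rfl | rfl <;> norm_num
  have hε2' : ε2 ≠ 0 := by rcases hε2 with rfl | rfl <;> norm_num
  have hm : 0 < b k := hpos k
  -- F-equations for p and q
  have hFp : u^2 - 2*(ε1*(if e1 then c0 else c1))*u + f0 = 0 := by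
    rw [← dist_sq_axpt c r e1 ε1 u hε1, hpc]; ring
  have hFq : w^2 - 2*(ε2*(if e2 then c0 else c1))*w + f0 = 0 := by
    rw [← dist_sq_axpt c r e2 ε2 w hε2, hqc]; ring
  -- witnesses on each axis at value b k
  have hwit : ∀ (e : Bool) (ε : ℝ), (ε = 1 ∨ ε = -1) →
      axpt e (ε * b k) ≠ axpt e1 (ε1 * u) → axpt e (ε * b k) ≠ axpt e2 (ε2 * w) →
      0 < (b k)^2 - 2*(ε*(if e then c0 else c1))*(b k) + f0 := by
    intro e ε hε hnp hnq
    have := hF _ (axpt_mem e hε k) hnp hnq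
    rwa [dist_sq_axpt c r e ε (b k) hε] at this
  by_cases hu : u = 0
  · subst hu
    -- p is the origin, f0 = 0
    have hf00 : f0 = 0 := by nlinarith [hFp]
    have hne2q : axpt e2 (ε2 * b k) ≠ axpt e2 (ε2 * w) := by
      rw [Ne, axpt_inj]
      exact fun hh => absurd (mul_left_cancel₀ hε2' hh) (ne_of_lt h2)
    have hne2p : axpt e2 (ε2 * b k) ≠ axpt e1 (ε1 * 0) := by
      rw [mul_zero, axpt_zero, ← axpt_zero e2, Ne, axpt_inj]
      exact mul_ne_zero hε2' (ne_of_gt (hpos k))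
    have hw2 := hwit e2 ε2 hε2 hne2p hne2q
    exact coreB (ε2*(if e2 then c0 else c1)) f0 0 w (b k) h1 h2 (by nlinarith) hFq hw2
  · have hu0' : 0 < u := lt_of_le_of_ne hu0 (Ne.symm hu)
    have hwpos : 0 < w := lt_trans hm h2
    -- origin is strictly outside the circle
    have hop : pt 0 0 ≠ axpt e1 (ε1 * u) := by
      rw [← axpt_zero e1, Ne, axpt_inj]
      exact fun hh => hε1' (by
        rcases mul_eq_zero.1 hh.symm with h | h
        · exact h
        · exact absurd h (ne_of_gt hu0'))
    have hoq : pt 0 0 ≠ axpt e2 (ε2 * w) := by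
      rw [← axpt_zero e2, Ne, axpt_inj]
      exact fun hh => hε2' (by
        rcases mul_eq_zero.1 hh.symm with h | h
        · exact h
        · exact absurd h (ne_of_gt hwpos))
    have hforig : 0 < f0 := by
      have := hF _ origin_mem hop hoq
      have hd : dist (pt 0 0) c ^ 2 = c0^2 + c1^2 := by
        rw [dist_sq_pt]; ring
      nlinarith [this]
    -- witness on p's axis differs from p (values differ) and similarly on q's axis
    have hw1p : axpt e1 (ε1 * b k) ≠ axpt e1 (ε1 * u) := by
      rw [Ne, axpt_inj]
      exact fun hh => absurd (mul_left_cancel₀ hε1' hh) (ne_of_gt h1)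
    have hw2q : axpt e2 (ε2 * b k) ≠ axpt e2 (ε2 * w) := by
      rw [Ne, axpt_inj]
      exact fun hh => absurd (mul_left_cancel₀ hε2' hh) (ne_of_lt h2)
    by_cases he : e1 = e2
    · subst he
      -- same axis; compare signs
      rcases hε1 with rfl | rfl <;> rcases hε2 with rfl | rfl
      · -- both +1
        exact coreB _ f0 u w (b k) h1 h2 hFp hFq (hwit e1 1 (Or.inl rfl) hw1p hw2q)
      · -- p:+1 q:-1
        exact coreC (1*(if e1 then c0 else c1)) f0 u w hu0' hwpos hFp (by nlinarith [hFq]) hforig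
      · -- p:-1 q:+1
        exact coreC (1*(if e1 then c0 else c1)) f0 w u hwpos hu0' hFq (by nlinarith [hFp]) hforig
      · -- both -1
        exact coreB _ f0 u w (b k) h1 h2 hFp hFq (hwit e1 (-1) (Or.inr rfl) hw1p hw2q)
    · -- different axes
      have hw1q : axpt e1 (ε1 * b k) ≠ axpt e2 (ε2 * w) :=
        axpt_cross he (mul_ne_zero hε1' (ne_of_gt hm))
      have hw2p : axpt e2 (ε2 * b k) ≠ axpt e1 (ε1 * u) :=
        axpt_cross (Ne.symm he) (mul_ne_zero hε2' (ne_of_gt hm))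
      exact coreA (ε1*(if e1 then c0 else c1)) (ε2*(if e2 then c0 else c1)) f0 u w (b k)
        hu0 h1 h2 hFp hFq (fun _ => hforig)
        (hwit e1 ε1 hε1 hw1p hw1q) (hwit e2 ε2 hε2 hw2p hw2q)

def lev (b : Fin n → ℝ) (s : Pt) : ℕ := (Finset.univ.filter fun k => b k ≤ val s).card

lemma val_nonneg (s : Pt) : 0 ≤ val s := le_trans (abs_nonneg _) (le_max_left _ _)

lemma lev_mono {s t : Pt} (h : val s ≤ val t) : lev b s ≤ lev b t := by
  apply Finset.card_le_card
  intro k hk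
  simp only [Finset.mem_filter, Finset.mem_univ, true_and] at hk ⊢
  exact le_trans hk h

lemma lev_origin (hpos : ∀ i, 0 < b i) : lev b (pt 0 0) = 0 := by
  rw [lev, Finset.card_eq_zero, Finset.filter_eq_empty_iff]
  intro k _
  rw [val_origin]
  exact not_le.2 (hpos k)

lemma lev_of_val_eq (hb : StrictMono b) {s : Pt} {j : Fin n} (h : val s = b j) :
    lev b s = j.1 + 1 := by
  rw [lev, h]
  have h1 : (Finset.univ.filter fun k => b k ≤ b j) = Finset.Iic j := by
    apply Finset.ext
    intro k
    simp [hb.le_iff_le]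
  rw [h1, Fin.card_Iic]

lemma adj_lev (hb : StrictMono b) (hpos : ∀ i, 0 < b i) {p q : Pt}
    (h : (DelaunayGraph (gset n b)).Adj p q) : lev b q ≤ lev b p + 1 := by
  rcases le_or_gt (val q) (val p) with hle | hlt
  · exact le_trans (lev_mono hle) (Nat.le_succ _)
  · obtain ⟨e2, ε2, w, hε2, hw0, hw, hqf, hvq⟩ := shape hpos h.2.2.1
    have hwpos : 0 < w := lt_of_le_of_lt (val_nonneg p) (hvq ▸ hlt)
    rcases hw with rfl | ⟨j, rfl⟩
    · exact absurd hwpos (lt_irrefl 0)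
    have hlevq : lev b q = j.1 + 1 := lev_of_val_eq hb hvq
    have hsub : Finset.Iio j ⊆ Finset.univ.filter fun k => b k ≤ val p := by
      intro k hk
      simp only [Finset.mem_Iio] at hk
      simp only [Finset.mem_filter, Finset.mem_univ, true_and]
      by_contra hnk
      push_neg at hnk
      exact noskip hb hpos h k hnk (by rw [hvq]; exact hb hk)
    have hj : j.1 ≤ lev b p := by
      have := Finset.card_le_card hsub
      rwa [Fin.card_Iio] at this
    omega

lemma walk_lev (hb : StrictMono b) (hpos : ∀ i, 0 < b i) {a c : Pt}
    (w : (DelaunayGraph (gset n b)).Walk a c) : lev b c ≤ lev b a + w.length := by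
  induction w with
  | nil => simp
  | cons h p ih =>
    have h1 := adj_lev hb hpos h
    rw [SimpleGraph.Walk.length_cons]
    omega

/-- Consecutive points along a ray are Delaunay-adjacent. -/
lemma adj_ray (hpos : ∀ i, 0 < b i) (e : Bool) {ε : ℝ}
    (hε : ε = 1 ∨ ε = -1) {u w : ℝ} (hu : 0 ≤ u) (huw : u < w)
    (hpS : axpt e (ε*u) ∈ gset n b) (hqS : axpt e (ε*w) ∈ gset n b)
    (hgap : ∀ k, ¬(u < b k ∧ b k < w)) :
    (DelaunayGraph (gset n b)).Adj (axpt e (ε*u)) (axpt e (ε*w)) := by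
  have hε' : ε ≠ 0 := by rcases hε with rfl | rfl <;> norm_num
  have hr0 : (0:ℝ) ≤ (w-u)/2 := by linarith
  refine ⟨?_, hpS, hqS, axpt e (ε*((u+w)/2)), (w-u)/2, ?_, ?_, ?_⟩
  · rw [Ne, axpt_inj]
    exact fun hh => absurd (mul_left_cancel₀ hε' hh) (ne_of_lt huw)
  · rw [dist_axpt_same]
    rcases hε with rfl | rfl
    · rw [show (1:ℝ)*u - 1*((u+w)/2) = -((w-u)/2) by ring, abs_neg, abs_of_nonneg hr0]
    · rw [show (-1:ℝ)*u - (-1)*((u+w)/2) = (w-u)/2 by ring, abs_of_nonneg hr0]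
  · rw [dist_axpt_same]
    rcases hε with rfl | rfl
    · rw [show (1:ℝ)*w - 1*((u+w)/2) = (w-u)/2 by ring, abs_of_nonneg hr0]
    · rw [show (-1:ℝ)*w - (-1)*((u+w)/2) = -((w-u)/2) by ring, abs_neg, abs_of_nonneg hr0]
  · intro s hs hsp hsq
    obtain ⟨e', ε', t, hε'', ht0, ht, rfl, -⟩ := shape hpos hs
    by_cases hte : t = 0
    · subst hte
      have hupos : 0 < u := by
        rcases hu.eq_or_lt with h0 | h0
        · exact absurd (by rw [← h0, mul_zero, axpt_zero, mul_zero, axpt_zero]) hsp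
        · exact h0
      have hs0 : axpt e' (ε'*0) = axpt e (ε*0) := by
        rw [mul_zero, mul_zero, axpt_zero, axpt_zero]
      rw [hs0, dist_axpt_same]
      apply lt_abs.2
      rcases hε with rfl | rfl
      · exact Or.inr (by linarith)
      · exact Or.inl (by linarith)
    · have htpos : 0 < t := lt_of_le_of_ne ht0 (Ne.symm hte)
      rcases ht with rfl | ⟨m, rfl⟩
      · exact absurd rfl hte
      by_cases he' : e' = e
      · subst he'
        rw [dist_axpt_same]
        apply lt_abs.2
        rcases hε with rfl | rfl <;> rcases hε'' with rfl | rfl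
        · -- ε = 1, ε' = 1
          have h3 : b m ≠ u := fun hh => hsp (by rw [hh])
          have h4 : b m ≠ w := fun hh => hsq (by rw [hh])
          have := hgap m
          rcases lt_or_gt_of_ne h3 with h5 | h5
          · exact Or.inr (by push_neg at this; nlinarith)
          · have h6 : w < b m := by
              rcases lt_or_gt_of_ne h4 with h7 | h7
              · exact absurd ⟨h5, h7⟩ this
              · exact h7
            exact Or.inl (by linarith)
        · -- ε = 1, ε' = -1
          exact Or.inr (by nlinarith)
        · -- ε = -1, ε' = 1
          exact Or.inl (by nlinarith)
        · -- ε = -1, ε' = -1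
          have h3 : b m ≠ u := fun hh => hsp (by rw [hh])
          have h4 : b m ≠ w := fun hh => hsq (by rw [hh])
          have := hgap m
          rcases lt_or_gt_of_ne h3 with h5 | h5
          · exact Or.inl (by nlinarith)
          · have h6 : w < b m := by
              rcases lt_or_gt_of_ne h4 with h7 | h7
              · exact absurd ⟨h5, h7⟩ this
              · exact h7
            exact Or.inr (by nlinarith)
      · rw [dist_axpt_cross he']
        apply (Real.lt_sqrt hr0).2
        have hsq1 : ε^2 = 1 := by rcases hε with rfl | rfl <;> norm_num
        have hsq2 : ε'^2 = 1 := by rcases hε'' with rfl | rfl <;> norm_num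
        have huw0 : 0 ≤ u * w := mul_nonneg hu (by linarith)
        nlinarith [sq_nonneg (b m), mul_pos htpos htpos]

lemma walk_ray (hb : StrictMono b) (hpos : ∀ i, 0 < b i) (e : Bool) {ε : ℝ}
    (hε : ε = 1 ∨ ε = -1) :
    ∀ (j : ℕ) (hj : j < n),
      ∃ wlk : (DelaunayGraph (gset n b)).Walk (pt 0 0) (axpt e (ε * b ⟨j, hj⟩)),
        wlk.length = j + 1 := by
  intro j
  induction j with
  | zero =>
    intro hj
    have hadj := adj_ray hpos e hε (u := 0) (w := b ⟨0, hj⟩) le_rfl (hpos _)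
      (by rw [mul_zero, axpt_zero]; exact origin_mem) (axpt_mem e hε _) ?_
    · rw [mul_zero, axpt_zero] at hadj
      exact ⟨SimpleGraph.Walk.cons hadj SimpleGraph.Walk.nil, rfl⟩
    · rintro k ⟨-, hk2⟩
      have := hb.lt_iff_lt.1 hk2
      simp [Fin.lt_def] at this
  | succ j ih =>
    intro hj
    have hj' : j < n := by omega
    obtain ⟨wlk, hlen⟩ := ih hj'
    have hlt : (⟨j, hj'⟩ : Fin n) < ⟨j+1, hj⟩ := by simp [Fin.lt_def]
    have hadj := adj_ray hpos e hε (u := b ⟨j, hj'⟩) (w := b ⟨j+1, hj⟩) (hpos _).le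
      (hb hlt) (axpt_mem e hε _) (axpt_mem e hε _) ?_
    · exact ⟨wlk.concat hadj, by rw [SimpleGraph.Walk.length_concat, hlen]⟩
    · rintro k ⟨hk1, hk2⟩
      have h1 := hb.lt_iff_lt.1 hk1
      have h2 := hb.lt_iff_lt.1 hk2
      simp [Fin.lt_def] at h1 h2
      omega

lemma smul_add_pt (α β p1 p2 q1 q2 : ℝ) :
    α • pt p1 p2 + β • pt q1 q2 = pt (α*p1+β*q1) (α*p2+β*q2) := by
  ext i
  fin_cases i <;>
    simp [pt, PiLp.add_apply, PiLp.smul_apply, smul_eq_mul]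

lemma hull_top (hb : StrictMono b) (hpos : ∀ i, 0 < b i) (hn : 0 < n) :
    HullVertex (gset n b) (pt (b ⟨n-1, by omega⟩) 0) := by
  set top : Fin n := ⟨n-1, by omega⟩ with htop
  constructor
  · exact mem_gset.2 (Or.inr ⟨top, Or.inl rfl⟩)
  · intro hmem
    have hsub : gset n b \ {pt (b top) 0} ⊆ {p : Pt | p 0 < b top} := by
      rintro s ⟨hs, hns⟩
      simp only [Set.mem_singleton_iff] at hns
      have hkle : ∀ k : Fin n, b k ≤ b top := fun k =>
        hb.monotone (by simp [Fin.le_def, htop]; omega)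
      rcases mem_gset.1 hs with rfl | ⟨k, rfl | rfl | rfl | rfl⟩ <;>
        simp only [Set.mem_setOf_eq, pt_zero]
      · exact hpos top
      · exact lt_of_le_of_ne (hkle k) fun hh => hns (by rw [hh])
      · exact lt_of_lt_of_le (by linarith [hpos k, hpos top]) le_rfl
      · exact hpos top
      · exact hpos top
    have hcvx : Convex ℝ {p : Pt | p 0 < b top} :=
      convex_halfSpace_lt ⟨fun a c => rfl, fun a c => rfl⟩ (b top)
    have := convexHull_min hsub hcvx hmem
    simp only [Set.mem_setOf_eq, pt_zero] at this
    exact lt_irrefl _ this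

lemma hull_char (hb : StrictMono b) (hpos : ∀ i, 0 < b i) (hn : 0 < n) {h : Pt}
    (hh : HullVertex (gset n b) h) :
    ∃ (e : Bool) (ε : ℝ), (ε = 1 ∨ ε = -1) ∧ h = axpt e (ε * b ⟨n-1, by omega⟩) := by
  obtain ⟨hmem, hnc⟩ := hh
  obtain ⟨e, ε, u, hε, hu0, hu, rfl, hval⟩ := shape hpos hmem
  set top : Fin n := ⟨n-1, by omega⟩ with htop
  have hε' : ε ≠ 0 := by rcases hε with rfl | rfl <;> norm_num
  rcases hu with rfl | ⟨i, rfl⟩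
  · exfalso
    apply hnc
    have h0 : axpt e (ε * 0) = pt 0 0 := by rw [mul_zero, axpt_zero]
    have h1 : pt (b ⟨0, hn⟩) 0 ∈ gset n b \ {axpt e (ε * 0)} := by
      refine ⟨mem_gset.2 (Or.inr ⟨_, Or.inl rfl⟩), ?_⟩
      simp only [Set.mem_singleton_iff, h0, pt_inj]
      intro hc
      exact absurd hc.1 (ne_of_gt (hpos _))
    have h2 : pt (-(b ⟨0, hn⟩)) 0 ∈ gset n b \ {axpt e (ε * 0)} := by
      refine ⟨mem_gset.2 (Or.inr ⟨_, Or.inr (Or.inl rfl)⟩), ?_⟩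
      simp only [Set.mem_singleton_iff, h0, pt_inj]
      intro hc
      have := hc.1
      have := hpos (⟨0, hn⟩ : Fin n)
      linarith
    apply segment_subset_convexHull h1 h2
    refine ⟨1/2, 1/2, by norm_num, by norm_num, by norm_num, ?_⟩
    rw [smul_add_pt, h0]
    congr 1 <;> ring
  · by_cases hi : b i = b top
    · exact ⟨e, ε, hε, by rw [hi]⟩
    · exfalso
      apply hnc
      have hit : b i < b top :=
        lt_of_le_of_ne (hb.monotone (by simp [Fin.le_def, htop]; omega)) hi
      have hbt : 0 < b top := hpos top
      set θ : ℝ := b i / b top with hθ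
      have hθ0 : 0 ≤ θ := le_of_lt (div_pos (hpos i) hbt)
      have hθ1 : θ ≤ 1 := by rw [hθ, div_le_one hbt]; exact hit.le
      have h1 : pt 0 0 ∈ gset n b \ {axpt e (ε * b i)} := by
        refine ⟨origin_mem, ?_⟩
        simp only [Set.mem_singleton_iff]
        intro hc
        rw [← axpt_zero e, axpt_inj] at hc
        exact absurd hc.symm (mul_ne_zero hε' (ne_of_gt (hpos i)))
      have h2 : axpt e (ε * b top) ∈ gset n b \ {axpt e (ε * b i)} := by
        refine ⟨axpt_mem e hε top, ?_⟩
        simp only [Set.mem_singleton_iff, axpt_inj]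
        intro hc
        exact absurd (mul_left_cancel₀ hε' hc) (ne_of_gt hit)
      apply segment_subset_convexHull h1 h2
      refine ⟨1 - θ, θ, by linarith, hθ0, by ring, ?_⟩
      have hcan : θ * (ε * b top) = ε * b i := by
        rw [hθ]; field_simp
      cases e <;>
        simp only [axpt, Bool.false_eq_true, if_true, if_false] <;>
        rw [smul_add_pt] <;>
        congr 1 <;> simp [hcan] <;> ring

lemma axpt_true_pt (t : ℝ) : axpt true (1 * t) = pt t 0 := by simp [axpt]

/-- Main lemma: for sorted positive values the depth is `n + 1`. -/
lemma main_sorted (hb : StrictMono b) (hpos : ∀ i, 0 < b i) :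
    relDepth (gadget n b) (pt 0 0) = n + 1 := by
  rw [relDepth, delaunayDepth]
  rcases Nat.eq_zero_or_pos n with rfl | hn
  · -- n = 0 : the set is just the origin
    have hset : insert (pt 0 0) (gadget 0 b) = {pt 0 0} := by
      simp [gadget]
    have h0 : (0:ℕ) ∈ {d : ℕ | ∃ h : Pt, HullVertex (insert (pt 0 0) (gadget 0 b)) h ∧
        (DelaunayGraph (insert (pt 0 0) (gadget 0 b))).dist (pt 0 0) h = d} := by
      refine ⟨pt 0 0, ⟨Set.mem_insert _ _, ?_⟩, by simp⟩
      rw [hset]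
      simp
    rw [le_antisymm (Nat.sInf_le h0) (Nat.zero_le _)]
  · set top : Fin n := ⟨n-1, by omega⟩ with htop
    have htopval : (top : Fin n).1 + 1 = n := by simp [htop]; omega
    -- lower bound on distance to every hull vertex
    have hlow : ∀ hv : Pt, HullVertex (gset n b) hv →
        n ≤ (DelaunayGraph (gset n b)).dist (pt 0 0) hv := by
      intro hv hhv
      obtain ⟨e, ε, hε, rfl⟩ := hull_char hb hpos hn hhv
      show n ≤ (DelaunayGraph (gset n b)).dist (pt 0 0) (axpt e (ε * b top))
      obtain ⟨wlk', -⟩ := walk_ray hb hpos e hε (n-1) (by omega)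
      have hreach : (DelaunayGraph (gset n b)).Reachable (pt 0 0) (axpt e (ε * b top)) := ⟨wlk'⟩
      obtain ⟨w2, hw2⟩ := hreach.exists_walk_length_eq_dist
      have hwl := walk_lev hb hpos w2
      have hlev : lev b (axpt e (ε * b top)) = n := by
        rw [lev_of_val_eq hb (val_axpt e hε (hpos top).le), htopval]
      rw [lev_origin hpos, hlev, hw2] at hwl
      omega
    -- the positive x-axis hull vertex
    have hhvtop : HullVertex (gset n b) (pt (b top) 0) := hull_top hb hpos hn
    have hup : (DelaunayGraph (gset n b)).dist (pt 0 0) (pt (b top) 0) ≤ n := by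
      obtain ⟨wlk, hlen⟩ := walk_ray hb hpos true (Or.inl rfl) (n-1) (by omega)
      have h1 : axpt true (1 * b top) = pt (b top) 0 := axpt_true_pt _
      rw [← h1]
      refine le_trans (SimpleGraph.dist_le wlk) ?_
      omega
    have hd : (DelaunayGraph (gset n b)).dist (pt 0 0) (pt (b top) 0) = n :=
      le_antisymm hup (hlow _ hhvtop)
    have hmemD : n ∈ {d : ℕ | ∃ h : Pt, HullVertex (insert (pt 0 0) (gadget n b)) h ∧
        (DelaunayGraph (insert (pt 0 0) (gadget n b))).dist (pt 0 0) h = d} :=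
      ⟨pt (b top) 0, hhvtop, hd⟩
    have hsinf : sInf {d : ℕ | ∃ h : Pt, HullVertex (insert (pt 0 0) (gadget n b)) h ∧
        (DelaunayGraph (insert (pt 0 0) (gadget n b))).dist (pt 0 0) h = d} = n := by
      refine le_antisymm (Nat.sInf_le hmemD) (le_csInf ⟨n, hmemD⟩ ?_)
      rintro d ⟨hv, hhv, rfl⟩
      exact hlow hv hhv
    rw [hsinf]
    omega

lemma gadget_range (n : ℕ) (x : Fin n → ℝ) :
    gadget n x = ⋃ v ∈ Set.range x,
      ({pt v 0, pt (-v) 0, pt 0 v, pt 0 (-v)} : Set Pt) := by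
  rw [Set.biUnion_range]
  rfl

end Aux

open Aux in
theorem stmt8aux (n : ℕ) (x : Fin n → ℝ) (hpos : ∀ i, 0 < x i) :
    relDepth (gadget n x) (pt 0 0) = n + 1 ↔ Function.Injective x := by
  classical
  set s : Finset ℝ := Finset.univ.image x with hs
  set b : Fin s.card → ℝ := fun i => ((s.orderIsoOfFin rfl) i : ℝ) with hbdef
  have hbmono : StrictMono b := fun i j h => by
    have := (s.orderIsoOfFin rfl).strictMono h
    exact_mod_cast this
  have hrange : Set.range b = ↑s := by
    ext y
    constructor
    · rintro ⟨i, rfl⟩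
      exact ((s.orderIsoOfFin rfl) i).2
    · intro hy
      refine ⟨(s.orderIsoOfFin rfl).symm ⟨y, hy⟩, ?_⟩
      show ((s.orderIsoOfFin rfl) ((s.orderIsoOfFin rfl).symm ⟨y, hy⟩) : ℝ) = y
      rw [OrderIso.apply_symm_apply]
  have hrangex : Set.range x = ↑s := by
    rw [hs, Finset.coe_image, Finset.coe_univ, Set.image_univ]
  have hposb : ∀ i, 0 < b i := by
    intro i
    have : b i ∈ Set.range x := by
      rw [hrangex, ← hrange]; exact ⟨i, rfl⟩
    obtain ⟨j, hj⟩ := this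
    rw [← hj]; exact hpos j
  have hgad : gadget n x = gadget s.card b := by
    rw [gadget_range, gadget_range, hrangex, hrange]
  have hmain : relDepth (gadget n x) (pt 0 0) = s.card + 1 := by
    rw [hgad]; exact main_sorted hbmono hposb
  rw [hmain]
  constructor
  · intro h
    have hcard : s.card = n := by omega
    have := Finset.card_image_iff.1 (by rw [← hs] at *; simp [hcard])
    rw [Finset.coe_univ] at this
    exact Set.injOn_univ.1 this
  · intro hinj
    rw [hs, Finset.card_image_of_injective _ hinj, Finset.card_univ, Fintype.card_fin]

/-- The Delaunay depth of the origin relative to the gadget set is `n + 1` iff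
all the `xᵢ` are pairwise distinct. -/
theorem stmt8 (n : ℕ) (x : Fin n → ℝ) (hpos : ∀ i, 0 < x i) :
    relDepth (gadget n x) (pt 0 0) = n + 1 ↔ Function.Injective x := stmt8aux n x hpos
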